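/- arXiv:2006.09908 — 10 statements merged into one kernel-verified Lean document; each statement's English description precedes it below -/
import Mathlib

section
/- Let n and k be integers with n ≥ 7 and 1 ≤ k ≤ n/2. Then the polynomial P(z) = z^k + z^{n-k} - z^n has a root in ℂ that is not real (i.e., there exists z ∈ ℂ with z^k + z^{n-k} - z^n = 0 and Im z ≠ 0). Consequently, not all roots of the two-terminal reliability of a cycle of order n ≥ 7 are real. -/
open Polynomial Complex

lemma prod_bound_aux (s : Multiset ℂ) (h : ∀ r ∈ s, r.im = 0) :
    2 ^ Multiset.card s * (s.map (‖·‖)).prod ≤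
      (s.map (fun r => ‖Complex.I - r‖ ^ 2)).prod := by
  induction s using Multiset.induction with
  | empty => simp
  | cons a s ih =>
    have ha : a.im = 0 := h a (Multiset.mem_cons_self a s)
    have hs := ih (fun r hr => h r (Multiset.mem_cons_of_mem hr))
    simp only [Multiset.map_cons, Multiset.prod_cons, Multiset.card_cons]
    have h1 : 2 * ‖a‖ ≤ ‖Complex.I - a‖ ^ 2 := by
      rw [Complex.sq_norm, Complex.normSq_apply]
      have : ‖a‖ = |a.re| := by
        rw [Complex.norm_def, Complex.normSq_apply, ha]
        rw [show a.re * a.re + 0 * 0 = a.re ^ 2 by ring, Real.sqrt_sq_eq_abs]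
      rw [this]
      simp only [Complex.sub_re, Complex.I_re, Complex.sub_im, Complex.I_im, ha]
      nlinarith [sq_nonneg (|a.re| - 1), _root_.sq_abs a.re]
    have hnn : (0:ℝ) ≤ (s.map (‖·‖)).prod :=
      Multiset.prod_nonneg (by intro x hx; simp at hx; obtain ⟨r, _, rfl⟩ := hx; positivity)
    calc 2 ^ (Multiset.card s + 1) * (‖a‖ * (s.map (‖·‖)).prod)
        = (2 * ‖a‖) * (2 ^ Multiset.card s * (s.map (‖·‖)).prod) := by ring
      _ ≤ (‖Complex.I - a‖ ^ 2) *
            (s.map (fun r => ‖Complex.I - r‖ ^ 2)).prod :=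
          mul_le_mul h1 hs (by positivity) (by positivity)

/-- For integers `n ≥ 7` and `1 ≤ k ≤ n/2`, the polynomial
`z^k + z^(n-k) - z^n` has a non-real complex root. Hence not all roots of the
two-terminal reliability of a cycle of order `n ≥ 7` are real. -/
theorem cycle_two_terminal_has_nonreal_root (n k : ℕ) (hn : 7 ≤ n)
    (hk : 1 ≤ k) (hkn : 2 * k ≤ n) :
    ∃ z : ℂ, z ^ k + z ^ (n - k) - z ^ n = 0 ∧ z.im ≠ 0 := by
  by_contra hcon
  push_neg at hcon
  set d := n - k with hdd
  set m := n - 2 * k with hmm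
  have hd4 : 4 ≤ d := by omega
  have hmd : m < d := by omega
  set Q : Polynomial ℂ := X ^ d - (X ^ m + C 1) with hQdef
  have hdegm : (X ^ m + C 1 : Polynomial ℂ).degree < (d : ℕ) := by
    apply lt_of_le_of_lt (degree_add_le _ _)
    rw [max_lt_iff]
    refine ⟨by rw [degree_X_pow]; exact_mod_cast hmd, lt_of_le_of_lt degree_C_le ?_⟩
    exact_mod_cast (show 0 < d by omega)
  have hmonic : Q.Monic := monic_X_pow_sub hdegm
  have hdeg : Q.natDegree = d := by
    have : Q.degree = d := by
      rw [hQdef, degree_sub_eq_left_of_degree_lt (by rwa [degree_X_pow])]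
      exact degree_X_pow d
    exact natDegree_eq_of_degree_eq_some this
  have hsplits : Splits Q := IsAlgClosed.splits Q
  have hprod : Q = (Q.roots.map fun a => X - C a).prod :=
    hsplits.eq_prod_roots_of_monic hmonic
  have hcard : Multiset.card Q.roots = d := by
    rw [← hdeg]; exact splits_iff_card_roots.mp hsplits
  have hreal : ∀ r ∈ Q.roots, r.im = 0 := by
    intro r hr
    have hroot : Q.eval r = 0 := (mem_roots hmonic.ne_zero).mp hr
    have heval : r ^ d - (r ^ m + 1) = 0 := by simpa [hQdef] using hroot
    apply hcon r
    have e1 : r ^ (n - k) = r ^ k * r ^ m := by rw [← pow_add]; congr 1; omega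
    have e2 : r ^ n = r ^ k * r ^ d := by rw [← pow_add]; congr 1; omega
    rw [show (n : ℕ) - k = d from rfl] at e1
    rw [e1, e2]
    linear_combination (-(r ^ k)) * heval
  have hevalI : Q.eval Complex.I = (Q.roots.map fun a => Complex.I - a).prod := by
    conv_lhs => rw [hprod]
    rw [eval_multiset_prod, Multiset.map_map]; simp
  have heval0 : Q.eval 0 = (Q.roots.map fun a => (0:ℂ) - a).prod := by
    conv_lhs => rw [hprod]
    rw [eval_multiset_prod, Multiset.map_map]; simp
  have habs0 : (1:ℝ) ≤ ‖Q.eval 0‖ := by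
    have h0 : Q.eval 0 = -((0:ℂ) ^ m + 1) := by
      simp [hQdef, zero_pow (by omega : d ≠ 0)]
    rw [h0]
    rcases Nat.eq_zero_or_pos m with hm | hm
    · rw [hm]; norm_num
    · rw [zero_pow (by omega : m ≠ 0)]; norm_num
  have habs0' : ‖Q.eval 0‖ = (Q.roots.map (‖·‖)).prod := by
    rw [heval0, show ∀ s : Multiset ℂ, ‖s.prod‖ = (s.map (‖·‖)).prod from map_multiset_prod (normHom (α := ℂ)), Multiset.map_map]
    congr 1
    apply Multiset.map_congr rfl
    intro x _
    simp
  have habsI : ‖Q.eval Complex.I‖ ≤ 3 := by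
    have : Q.eval Complex.I = Complex.I ^ d - (Complex.I ^ m + 1) := by simp [hQdef]
    rw [this, sub_eq_add_neg]
    calc ‖Complex.I ^ d + -(Complex.I ^ m + 1)‖
        ≤ ‖Complex.I ^ d‖ + ‖-(Complex.I ^ m + 1)‖ :=
          norm_add_le _ _
      _ = 1 + ‖Complex.I ^ m + 1‖ := by
          rw [norm_pow, Complex.norm_I, one_pow, norm_neg]
      _ ≤ 1 + (‖Complex.I ^ m‖ + ‖(1:ℂ)‖) :=
          add_le_add_right (norm_add_le _ _) 1
      _ ≤ 3 := by rw [norm_pow, Complex.norm_I, one_pow, norm_one]; norm_num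
  have key := prod_bound_aux Q.roots hreal
  rw [hcard, ← habs0'] at key
  have hrhs : (Q.roots.map (fun r => ‖Complex.I - r‖ ^ 2)).prod =
      ‖Q.eval Complex.I‖ ^ 2 := by
    rw [hevalI, show ∀ s : Multiset ℂ, ‖s.prod‖ = (s.map (‖·‖)).prod from map_multiset_prod (normHom (α := ℂ)), Multiset.map_map, ← Multiset.prod_map_pow]
    rfl
  rw [hrhs] at key
  have h16 : (16:ℝ) ≤ 2 ^ d := by
    calc (16:ℝ) = 2 ^ 4 := by norm_num
      _ ≤ 2 ^ d := pow_le_pow_right₀ (by norm_num) hd4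
  nlinarith [norm_nonneg (Q.eval Complex.I)]
end

section
/- Let ε > 0, let l ≥ 2 be an even integer with (1 + ε)^l > 2, and let k ≥ 2 be an even integer. Then the polynomial f(p) = 1 - (1 - p^l)^k has a real root x with -1 - ε < x < -1. -/
/-- Let `ε > 0`, let `l ≥ 2` be an even integer with `(1 + ε)^l > 2`, and let
`k ≥ 2` be an even integer. Then `1 - (1 - p^l)^k` has a real root strictly
between `-1 - ε` and `-1`. -/
theorem theta_graph_root_left_of_neg_one (ε : ℝ) (hε : 0 < ε)
    (l k : ℕ) (hl2 : 2 ≤ l) (hl : Even l) (hlε : 2 < (1 + ε) ^ l)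
    (hk2 : 2 ≤ k) (hke : Even k) :
    ∃ x : ℝ, 1 - (1 - x ^ l) ^ k = 0 ∧ -1 - ε < x ∧ x < -1 := by
  have hlne : l ≠ 0 := by omega
  have hlpos : (0:ℝ) < (l:ℝ)⁻¹ := by positivity
  set y : ℝ := (2:ℝ) ^ ((l:ℝ)⁻¹) with hy
  refine ⟨-y, ?_, ?_, ?_⟩
  · have hyl : y ^ l = 2 := Real.rpow_inv_natCast_pow (by norm_num) hlne
    have hneg : (-y) ^ l = y ^ l := hl.neg_pow y
    rw [hneg, hyl]
    norm_num [hke.neg_one_pow]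
  · have h1 : (1 + ε) ^ l = ((1 + ε) ^ l : ℝ) := rfl
    have h2 : y < 1 + ε := by
      have := Real.rpow_lt_rpow (by norm_num) hlε hlpos
      rwa [Real.pow_rpow_inv_natCast (by linarith) hlne] at this
    linarith
  · have h1 : (1:ℝ) < y := by
      rw [hy]
      exact Real.one_lt_rpow_iff_of_pos (by norm_num) |>.mpr (Or.inl ⟨by norm_num, hlpos⟩)
    linarith
end

section
/- Let f : ℝ → ℝ be given by f(x) = 2x² - x⁴. For every ε > 0 there exist a positive integer n and a real number x with f^[n](x) = 0 (the n-fold iterate of f at x is zero) and |x + (1 + √5)/2| < ε. That is, the closure of the union over all n ≥ 1 of the real roots of the n-fold iterates of f contains -(1+√5)/2, the negative of the golden ratio. -/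
set_option maxHeartbeats 1000000 in
/-- Let `f x = 2x² - x⁴`. For every `ε > 0` there are `n ≥ 1` and a real `x`
with `f^[n] x = 0` and `|x + (1 + √5)/2| < ε`: the closure of the real roots
of the iterates of `f` contains the negative of the golden ratio. -/
theorem iterated_C4_roots_approach_neg_golden_ratio :
    ∀ ε : ℝ, 0 < ε → ∃ n : ℕ, 0 < n ∧ ∃ x : ℝ,
      (fun y : ℝ => 2 * y ^ 2 - y ^ 4)^[n] x = 0 ∧
      |x + (1 + Real.sqrt 5) / 2| < ε := by
  intro ε hε
  set f : ℝ → ℝ := fun y => 2 * y ^ 2 - y ^ 4 with hf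
  obtain ⟨a, ha_def⟩ : ∃ a : ℝ, a = -((1 + Real.sqrt 5) / 2) := ⟨_, rfl⟩
  have h5 : Real.sqrt 5 ^ 2 = 5 := Real.sq_sqrt (by norm_num)
  have h5l : (2.2 : ℝ) < Real.sqrt 5 := by nlinarith [Real.sqrt_nonneg 5]
  have h5u : Real.sqrt 5 < 2.3 := by nlinarith [Real.sqrt_nonneg 5]
  have ha2 : a ^ 2 = 1 - a := by rw [ha_def]; nlinarith [h5]
  have ha_lb : (-1.65 : ℝ) < a := by rw [ha_def]; linarith
  have ha_ub : a < (-1.6 : ℝ) := by rw [ha_def]; linarith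
  have h2 : Real.sqrt 2 ^ 2 = 2 := Real.sq_sqrt (by norm_num)
  have h2l : (1.41 : ℝ) < Real.sqrt 2 := by nlinarith [Real.sqrt_nonneg 2]
  have h2u : Real.sqrt 2 < 1.42 := by nlinarith [Real.sqrt_nonneg 2]
  have hfa : f a = a := by
    show 2 * a ^ 2 - a ^ 4 = a
    nlinarith [ha2]
  have hcont : Continuous f := by fun_prop
  -- key pullback lemma
  have key : ∀ t : ℝ, a ≤ t → t ≤ a + 0.3 →
      ∃ x : ℝ, a ≤ x ∧ x ≤ a + (t - a) / 4 ∧ f x = t := by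
    intro t ht1 ht2
    obtain ⟨d, hd_def⟩ : ∃ d : ℝ, d = (t - a) / 4 := ⟨_, rfl⟩
    have hd0 : 0 ≤ d := by rw [hd_def]; linarith
    have hdu : d ≤ 0.075 := by rw [hd_def]; linarith
    have hb : (0:ℝ) ≤ -4*a + (6*a-4)*d - 4*a*d^2 - d^3 := by
      nlinarith [mul_nonneg (by linarith : (0:ℝ) ≤ a + 1.65) hd0,
        mul_nonneg hd0 (by linarith : (0:ℝ) ≤ 0.075 - d),
        mul_nonneg (mul_nonneg hd0 hd0) hd0, hd0, hdu]
    have heq : 2*(a+d)^2 - (a+d)^4 - a - 4*d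
        = d * (-4*a + (6*a-4)*d - 4*a*d^2 - d^3) := by
      linear_combination (2 - (a^2 - a + 2) - 4*d*(a-1) - 6*d^2) * ha2
    have hfd : a + 4 * d ≤ f (a + d) := by
      show a + 4 * d ≤ 2 * (a + d) ^ 2 - (a + d) ^ 4
      nlinarith [mul_nonneg hd0 hb, heq]
    have hab : a ≤ a + d := by linarith
    have hiv := intermediate_value_Icc hab hcont.continuousOn
    have hmem : t ∈ Set.Icc (f a) (f (a + d)) := by
      constructor
      · rw [hfa]; exact ht1
      · calc t = a + 4 * d := by rw [hd_def]; ring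
          _ ≤ f (a + d) := hfd
    obtain ⟨x, hx, hfx⟩ := hiv hmem
    refine ⟨x, hx.1, ?_, hfx⟩
    have := hx.2
    rw [hd_def] at this
    linarith
  -- iterated preimages of -√2
  have main : ∀ n : ℕ, ∃ x : ℝ, a ≤ x ∧ x ≤ a + 0.3 / 4 ^ n ∧
      f^[n] x = -Real.sqrt 2 := by
    intro n
    induction n with
    | zero =>
      refine ⟨-Real.sqrt 2, by linarith, ?_, rfl⟩
      norm_num
      linarith
    | succ n ih =>
      obtain ⟨x, hx1, hx2, hx3⟩ := ih
      have h4n : (1 : ℝ) ≤ 4 ^ n := one_le_pow₀ (by norm_num)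
      have h4p : (0 : ℝ) < 4 ^ n := by positivity
      have hdiv : (0.3 : ℝ) / 4 ^ n ≤ 0.3 := by
        rw [div_le_iff₀ h4p]; nlinarith
      obtain ⟨y, hy1, hy2, hy3⟩ := key x hx1 (by linarith)
      have hps : (0.3 : ℝ) / 4 ^ (n + 1) = (0.3 / 4 ^ n) / 4 := by
        rw [pow_succ]; ring
      refine ⟨y, hy1, ?_, ?_⟩
      · rw [hps]; linarith
      · rw [Function.iterate_succ_apply, hy3, hx3]
  -- pick n large enough
  obtain ⟨n, hn⟩ := pow_unbounded_of_one_lt ((0.3 : ℝ) / ε) (by norm_num : (1:ℝ) < 4)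
  have h4p : (0 : ℝ) < 4 ^ n := by positivity
  have hsmall : (0.3 : ℝ) / 4 ^ n < ε := by
    rw [div_lt_iff₀ hε] at hn
    rw [div_lt_iff₀ h4p]
    linarith [mul_comm ε ((4:ℝ) ^ n), hn]
  obtain ⟨x, hx1, hx2, hx3⟩ := main n
  refine ⟨n + 1, Nat.succ_pos n, x, ?_, ?_⟩
  · rw [Function.iterate_succ_apply', hx3]
    show 2 * (-Real.sqrt 2) ^ 2 - (-Real.sqrt 2) ^ 4 = 0
    nlinarith [h2]
  · have hxa : x + (1 + Real.sqrt 5) / 2 = x - a := by rw [ha_def]; ring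
    rw [hxa, abs_of_nonneg (by linarith)]
    linarith
end

section
/- The closure of the set S = { w ∈ ℂ : there exist positive integers l and k with (1 - w^l)^k = 1 } contains the closed unit disk { z ∈ ℂ : |z| ≤ 1 } centered at 0. Equivalently, for every z ∈ ℂ with |z| ≤ 1 and every ε > 0 there exist positive integers l, k and w ∈ ℂ with (1 - w^l)^k = 1 and |w - z| < ε. -/
open Complex in
theorem key1 (t : ℝ) : 1 - Complex.exp (2*t*Complex.I) = -2*Complex.I*(Real.sin t)*Complex.exp (t*Complex.I) := by
  have h : Complex.exp (-t*I) * Complex.exp (t*I) = 1 := by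
    rw [← Complex.exp_add]; ring_nf; exact Complex.exp_zero
  have h2 : Complex.exp (2*t*I) = Complex.exp (t*I) * Complex.exp (t*I) := by
    rw [← Complex.exp_add]; ring_nf
  rw [Complex.ofReal_sin, Complex.sin, h2]
  have hI := Complex.I_sq
  linear_combination (-1) * h + (Complex.exp (-t*I)*Complex.exp (t*I) - Complex.exp (t*I)^2) * hI

theorem key2 (t : ℝ) : ‖1 - Complex.exp (2*t*Complex.I)‖ ≤ 2*|t| := by
  rw [key1]
  have hs := Real.abs_sin_le_abs (x := t)
  calc ‖-2*Complex.I*(Real.sin t)*Complex.exp (t*Complex.I)‖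
      = 2 * |Real.sin t| := by
        rw [norm_mul, norm_mul, norm_mul, Complex.norm_exp_ofReal_mul_I, Complex.norm_real]
        simp
    _ ≤ 2*|t| := by linarith

set_option maxHeartbeats 1000000 in
/-- The closure of the set of roots of the polynomials `1 - (1 - w^l)^k`
(the two-terminal reliabilities of generalized theta graphs) contains the
closed unit disk centered at `0`. -/
theorem theta_roots_closure_contains_unit_disk_at_zero :
    ∀ z : ℂ, ‖z‖ ≤ 1 → ∀ ε : ℝ, 0 < ε →
      ∃ (l k : ℕ) (w : ℂ), 0 < l ∧ 0 < k ∧ (1 - w ^ l) ^ k = 1 ∧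
        ‖w - z‖ < ε := by
  intro z hz ε hε
  by_cases hz0 : z = 0
  · exact ⟨1, 1, 0, one_pos, one_pos, by norm_num, by simpa [hz0] using hε⟩
  set r := ‖z‖ with hr_def
  have hr0 : 0 < r := by simpa [hr_def] using (norm_pos_iff.mpr hz0)
  have hr1 : r ≤ 1 := hz
  set α := Complex.arg z with hα_def
  set l : ℕ := ⌈4/ε⌉₊ + 1 with hl_def
  have hl0 : 0 < l := Nat.succ_pos _
  have hlR : (0:ℝ) < l := by exact_mod_cast hl0
  have hl4 : 4 / (l:ℝ) < ε := by
    rw [div_lt_iff₀ hlR]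
    have h1 : 4/ε ≤ (⌈4/ε⌉₊ : ℝ) := Nat.le_ceil _
    have h2 : ((⌈4/ε⌉₊:ℝ)) + 1 = (l:ℝ) := by push_cast [hl_def]; ring
    have h3 : ε * (4/ε) = 4 := by field_simp
    nlinarith
  set v₀ : ℝ := r ^ l with hv₀_def
  have hv₀0 : 0 < v₀ := pow_pos hr0 l
  have hv₀1 : v₀ ≤ 1 := pow_le_one₀ hr0.le hr1
  have hpi := Real.pi_pos
  have hpi4 : Real.pi < 3.15 := Real.pi_lt_d2
  have hpi3 : 3 < Real.pi := Real.pi_gt_three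
  have hiv : v₀/8 < v₀/(2*Real.pi) := by
    apply div_lt_div_of_pos_left hv₀0 (by linarith) (by linarith)
  obtain ⟨q, hq1, hq2⟩ := exists_rat_btwn hiv
  have hq0 : (0:ℝ) < (q:ℝ) := lt_trans (by positivity) hq1
  have hq0' : 0 < q := by exact_mod_cast hq0
  set k : ℕ := q.den with hk_def
  have hk0 : 0 < k := q.pos
  have hjq : (q:ℝ) * k = (q.num : ℝ) := by
    rw [Rat.cast_def]
    field_simp
    rfl
  have hq_half : (q:ℝ) < 1/(2*Real.pi) := lt_of_lt_of_le hq2 (by gcongr)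
  set v : ℝ := 2 * Real.sin (Real.pi * q) with hv_def
  have hπq0 : 0 < Real.pi * q := by positivity
  have hπq_half : Real.pi * (q:ℝ) ≤ Real.pi / 2 := by
    rw [lt_div_iff₀ (by linarith : (0:ℝ) < 2*Real.pi)] at hq_half
    nlinarith
  have hsin_lb : 2 * (q:ℝ) ≤ Real.sin (Real.pi * q) := by
    have := Real.mul_le_sin (x := Real.pi * q) hπq0.le hπq_half
    have hne : Real.pi ≠ 0 := ne_of_gt hpi
    calc 2 * (q:ℝ) = 2 / Real.pi * (Real.pi * q) := by field_simp
    _ ≤ Real.sin (Real.pi * q) := this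
  have hsin_ub : Real.sin (Real.pi * q) ≤ Real.pi * q := Real.sin_le hπq0.le
  have hv_lb : v₀/2 ≤ v := by
    have : v₀/8 < (q:ℝ) := hq1
    simp only [hv_def]; nlinarith
  have hv_ub : v ≤ v₀ := by
    have h2 : (q:ℝ) * (2*Real.pi) < v₀ := by
      have h := hq2
      rw [lt_div_iff₀ (by linarith : (0:ℝ) < 2*Real.pi)] at h
      exact h
    simp only [hv_def]; nlinarith
  have hv0 : 0 < v := by linarith
  set c : ℝ := (α*l - Real.pi*q + Real.pi/2)/(2*Real.pi) with hc_def
  set m : ℤ := round c with hm_def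
  set β : ℝ := (Real.pi*q - Real.pi/2 + 2*Real.pi*m)/l with hβ_def
  have hβl0 : β * l = Real.pi*q - Real.pi/2 + 2*Real.pi*m := by
    rw [hβ_def]; exact div_mul_cancel₀ _ (ne_of_gt hlR)
  have hβα : |β - α| ≤ Real.pi / l := by
    have hmc : |(m:ℝ) - c| ≤ 1/2 := by
      rw [hm_def, abs_sub_comm]; exact abs_sub_round c
    have h2c : 2*Real.pi*c = α*l - Real.pi*q + Real.pi/2 := by
      rw [hc_def]; field_simp
    have hβl : β * l - α * l = 2*Real.pi*m - 2*Real.pi*c := by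
      linarith [h2c, hβl0]
    have h3 : |β*l - α*l| ≤ Real.pi := by
      rw [hβl]
      have : 2*Real.pi*m - 2*Real.pi*c = 2*Real.pi*((m:ℝ) - c) := by ring
      rw [this, abs_mul, abs_of_pos (by linarith : (0:ℝ) < 2*Real.pi)]
      nlinarith [mul_le_mul_of_nonneg_left hmc hpi.le]
    have h4 : |β - α| * l ≤ Real.pi := by
      rw [← abs_of_pos hlR, ← abs_mul]
      have : (β - α) * (l:ℝ) = β*l - α*l := by ring
      rw [this]; exact h3
    exact (le_div_iff₀ hlR).2 h4
  set ρ : ℝ := Real.exp (Real.log v / l) with hρ_def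
  set w : ℂ := Complex.exp ((Real.log v / l : ℝ) + (β:ℝ) * Complex.I) with hw_def
  have hβl0C : ((β:ℝ):ℂ) * (l:ℂ) = (((Real.pi*q - Real.pi/2 + 2*Real.pi*m : ℝ)):ℂ) := by
    exact_mod_cast congrArg (fun x : ℝ => (x:ℂ)) hβl0
  have hlogC : ((Real.log v / l : ℝ):ℂ) * (l:ℂ) = ((Real.log v : ℝ):ℂ) := by
    have : (Real.log v / l * l : ℝ) = Real.log v := div_mul_cancel₀ _ (ne_of_gt hlR)
    exact_mod_cast congrArg (fun x : ℝ => (x:ℂ)) this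
  have hwl : w ^ l = 1 - Complex.exp (2*((Real.pi*q : ℝ):ℂ)*Complex.I) := by
    rw [hw_def, ← Complex.exp_nat_mul]
    have harg : (l:ℂ) * (((Real.log v / l : ℝ):ℂ) + ((β:ℝ):ℂ) * Complex.I)
        = ((Real.log v : ℝ):ℂ) + (((Real.pi*q - Real.pi/2 : ℝ)):ℂ) * Complex.I
          + (m:ℂ) * (2*((Real.pi:ℝ):ℂ)*Complex.I) := by
      push_cast at hβl0C hlogC ⊢
      linear_combination hlogC + Complex.I * hβl0C
    rw [harg, Complex.exp_add, Complex.exp_add, Complex.exp_int_mul_two_pi_mul_I, mul_one]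
    have hev : Complex.exp (((Real.log v : ℝ)):ℂ) = ((v:ℝ):ℂ) := by
      rw [← Complex.ofReal_exp, Real.exp_log hv0]
    rw [hev, key1 (Real.pi*q)]
    have hsplit : (((Real.pi*q - Real.pi/2 : ℝ)):ℂ) * Complex.I
        = ((Real.pi*q : ℝ):ℂ) * Complex.I + ((-(Real.pi/2) : ℝ):ℂ) * Complex.I := by
      push_cast; ring
    rw [hsplit, Complex.exp_add]
    have hexp_half : Complex.exp (((-(Real.pi/2) : ℝ):ℂ) * Complex.I) = -Complex.I := by
      rw [Complex.exp_mul_I, ← Complex.ofReal_cos, ← Complex.ofReal_sin]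
      simp [Real.cos_pi_div_two, Real.sin_pi_div_two]
    rw [hexp_half]
    have hvC : ((v:ℝ):ℂ) = 2 * ((Real.sin (Real.pi*q) : ℝ):ℂ) := by
      rw [hv_def]; push_cast; ring
    rw [hvC]; ring
  have hpow : (1 - w ^ l) ^ k = 1 := by
    rw [hwl]
    have hss : (1 : ℂ) - (1 - Complex.exp (2*((Real.pi*q : ℝ):ℂ)*Complex.I))
        = Complex.exp (2*((Real.pi*q : ℝ):ℂ)*Complex.I) := by ring
    rw [hss, ← Complex.exp_nat_mul]
    have hjqC : ((q:ℝ):ℂ) * ((k:ℝ):ℂ) = ((q.num:ℝ):ℂ) := by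
      exact_mod_cast congrArg (fun x : ℝ => (x:ℂ)) hjq
    have harg2 : (k:ℂ) * (2*((Real.pi*q : ℝ):ℂ)*Complex.I)
        = (q.num:ℂ) * (2*((Real.pi:ℝ):ℂ)*Complex.I) := by
      push_cast at hjqC ⊢
      linear_combination 2*((Real.pi:ℝ):ℂ)*Complex.I * hjqC
    rw [harg2, Complex.exp_int_mul_two_pi_mul_I]
  -- distance estimate
  have hw_split : w = ((ρ:ℝ):ℂ) * Complex.exp (((β:ℝ):ℂ) * Complex.I) := by
    rw [hw_def, Complex.exp_add, ← Complex.ofReal_exp, hρ_def]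
  have hz_split : ((r:ℝ):ℂ) * Complex.exp (((α:ℝ):ℂ) * Complex.I) = z :=
    Complex.norm_mul_exp_arg_mul_I z
  have habs1 : ‖Complex.exp (((β:ℝ):ℂ)*Complex.I)
      - Complex.exp (((α:ℝ):ℂ)*Complex.I)‖ ≤ |β - α| := by
    have hfac : Complex.exp (((β:ℝ):ℂ)*Complex.I) - Complex.exp (((α:ℝ):ℂ)*Complex.I)
        = Complex.exp (((α:ℝ):ℂ)*Complex.I)
          * (Complex.exp (2*(((β-α)/2 : ℝ):ℂ)*Complex.I) - 1) := by
      rw [mul_sub, mul_one, ← Complex.exp_add]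
      congr 2
      push_cast; ring
    rw [hfac, norm_mul, Complex.norm_exp_ofReal_mul_I, one_mul]
    have hk2 := key2 ((β - α)/2)
    have hneg : ‖Complex.exp (2*(((β-α)/2 : ℝ):ℂ)*Complex.I) - 1‖
        = ‖1 - Complex.exp (2*(((β-α)/2 : ℝ):ℂ)*Complex.I)‖ := by
      rw [← norm_neg]; ring_nf
    rw [hneg]
    calc ‖1 - Complex.exp (2*(((β-α)/2 : ℝ):ℂ)*Complex.I)‖ ≤ 2*|(β-α)/2| := hk2
      _ = |β - α| := by rw [abs_div, abs_two]; ring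
  -- radial estimate
  have hr_exp : r = Real.exp (Real.log v₀ / l) := by
    rw [hv₀_def, Real.log_pow, mul_div_cancel_left₀ _ (ne_of_gt hlR), Real.exp_log hr0]
  have hba : Real.log v ≤ Real.log v₀ := Real.log_le_log hv0 hv_ub
  have hab2 : Real.log v₀ - Real.log v ≤ Real.log 2 := by
    have h2v : v₀ ≤ 2 * v := by linarith
    have := Real.log_le_log hv₀0 h2v
    rw [Real.log_mul (by norm_num) (ne_of_gt hv0)] at this
    linarith
  have ha0 : Real.log v₀ / l ≤ 0 :=
    div_nonpos_of_nonpos_of_nonneg (Real.log_nonpos hv₀0.le hv₀1) hlR.le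
  have hρler : ρ ≤ r := by
    rw [hρ_def, hr_exp]
    exact Real.exp_le_exp.2 (by gcongr)
  have hrρ : r - ρ ≤ Real.log 2 / l := by
    have h1 : Real.exp (Real.log v₀ / l) ≤ 1 := Real.exp_le_one_iff.2 ha0
    have h2 : (Real.log v / l - Real.log v₀ / l) + 1
        ≤ Real.exp (Real.log v / l - Real.log v₀ / l) := Real.add_one_le_exp _
    have h3 : Real.exp (Real.log v / l)
        = Real.exp (Real.log v₀ / l) * Real.exp (Real.log v / l - Real.log v₀ / l) := by
      rw [← Real.exp_add]; ring_nf
    have h4 : Real.log v₀ / l - Real.log v / l ≤ Real.log 2 / l := by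
      rw [div_sub_div_same]; gcongr
    have h5 : 0 ≤ Real.log v₀ / l - Real.log v / l := by
      rw [div_sub_div_same]
      exact div_nonneg (by linarith) hlR.le
    have hea := Real.exp_pos (Real.log v₀ / l)
    rw [hρ_def, hr_exp]
    nlinarith [Real.exp_pos (Real.log v / l)]
  -- assemble
  refine ⟨l, k, w, hl0, hk0, hpow, ?_⟩
  have hdiff : w - z = (((ρ - r : ℝ)):ℂ) * Complex.exp (((β:ℝ):ℂ)*Complex.I)
      + ((r:ℝ):ℂ) * (Complex.exp (((β:ℝ):ℂ)*Complex.I) - Complex.exp (((α:ℝ):ℂ)*Complex.I)) := by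
    rw [hw_split, ← hz_split]; push_cast; ring
  have hbound : ‖w - z‖ ≤ |ρ - r| + r * |β - α| := by
    rw [hdiff]
    calc ‖_‖ ≤ ‖(((ρ - r : ℝ)):ℂ) * Complex.exp (((β:ℝ):ℂ)*Complex.I)‖
          + ‖((r:ℝ):ℂ) * (Complex.exp (((β:ℝ):ℂ)*Complex.I)
            - Complex.exp (((α:ℝ):ℂ)*Complex.I))‖ := norm_add_le _ _
      _ ≤ |ρ - r| + r * |β - α| := by
          rw [norm_mul, norm_mul, Complex.norm_exp_ofReal_mul_I, mul_one,
            Complex.norm_real, Complex.norm_real, Real.norm_eq_abs, Real.norm_eq_abs, abs_of_pos hr0]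
          gcongr
  have hlog2 : Real.log 2 < 0.6931471808 := Real.log_two_lt_d9
  have hfin : |ρ - r| + r * |β - α| < ε := by
    have e1 : |ρ - r| ≤ Real.log 2 / l := by
      rw [abs_of_nonpos (by linarith), neg_sub]; exact hrρ
    have e2 : r * |β - α| ≤ Real.pi / l := by
      calc r * |β - α| ≤ 1 * |β - α| := by gcongr
        _ = |β - α| := one_mul _
        _ ≤ Real.pi / l := hβα
    have e3 : Real.log 2 / l + Real.pi / l < 4 / l := by
      rw [← add_div, div_lt_div_iff₀ hlR hlR]
      nlinarith
    linarith
  exact lt_of_le_of_lt hbound hfin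
end

section
/- Let n and k be integers with n ≥ 3 and 1 ≤ k ≤ n/2. Then the polynomial g(z) = z^{n-k} - z^{n-2k} - 1 has a root in the open left half-plane: there exists z ∈ ℂ with g(z) = 0 and Re z < 0. -/
open Polynomial

/-- For integers `n ≥ 3` and `1 ≤ k ≤ n/2`, the polynomial
`z^(n-k) - z^(n-2k) - 1` has a root in the open left half-plane. -/
theorem cycle_factor_root_in_left_half_plane (n k : ℕ) (hn : 3 ≤ n)
    (hk : 1 ≤ k) (hkn : 2 * k ≤ n) :
    ∃ z : ℂ, z ^ (n - k) - z ^ (n - 2 * k) - 1 = 0 ∧ z.re < 0 := by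
  set a := n - k with ha
  set b := n - 2 * k with hb
  have hab : b < a := by omega
  have ha2 : 2 ≤ a := by omega
  -- a real root r with 1 < r ≤ 2
  have hf2 : (0:ℝ) ≤ (2:ℝ) ^ a - 2 ^ b - 1 := by
    have h1 : (2:ℝ) ^ b + 1 ≤ 2 ^ (b + 1) := by
      rw [pow_succ]
      have : (1:ℝ) ≤ 2 ^ b := one_le_pow₀ (by norm_num)
      linarith
    have h2 : (2:ℝ) ^ (b + 1) ≤ 2 ^ a :=
      pow_le_pow_right₀ (by norm_num) (by omega)
    linarith
  obtain ⟨r, hrmem, hr⟩ : ∃ r ∈ Set.Icc (1:ℝ) 2, r ^ a - r ^ b - 1 = 0 := by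
    have hc : ContinuousOn (fun x : ℝ => x ^ a - x ^ b - 1) (Set.Icc 1 2) := by
      fun_prop
    have := intermediate_value_Icc (by norm_num : (1:ℝ) ≤ 2) hc
    have h0 : (0:ℝ) ∈ Set.Icc ((1:ℝ) ^ a - 1 ^ b - 1) ((2:ℝ) ^ a - 2 ^ b - 1) := by
      rw [Set.mem_Icc]
      exact ⟨by norm_num, hf2⟩
    obtain ⟨r, hrmem, hr⟩ := this h0
    exact ⟨r, hrmem, hr⟩
  have hr1 : 1 < r := by
    rcases lt_or_eq_of_le hrmem.1 with h | h
    · exact h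
    · exfalso; rw [← h] at hr; simp at hr
  -- the complex polynomial
  set P : ℂ[X] := X ^ a - (X ^ b + 1) with hP
  have hmo : P.Monic := by
    apply monic_X_pow_sub
    refine lt_of_le_of_lt (degree_add_le _ _) ?_
    simp only [degree_X_pow, degree_one, sup_lt_iff]
    refine ⟨?_, ?_⟩
    · exact_mod_cast hab
    · exact_mod_cast (show 0 < a by omega)
  have hPne : P ≠ 0 := hmo.ne_zero
  have hdeg : P.natDegree = a := by
    have : P = X ^ a - (X ^ b + 1) := rfl
    rw [this]
    compute_degree!
    all_goals first
      | omega
      | (rw [if_neg (show ¬ a = b by omega), if_neg (show ¬ a = 0 by omega)]; decide)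
  have hsplits : Splits P := IsAlgClosed.splits P
  have hsum : P.roots.sum = -P.nextCoeff := by
    have := hsplits.nextCoeff_eq_neg_sum_roots_of_monic hmo
    rw [this]; ring
  -- next coefficient is 0 or -1
  have hnext : (-P.nextCoeff).re ≤ 1 := by
    have h1 : P.nextCoeff = P.coeff (a - 1) := by
      rw [nextCoeff, hdeg]
      simp [show a ≠ 0 by omega]
    have h2 : P.coeff (a - 1) = -(if b = a - 1 then 1 else 0) := by
      simp only [hP, coeff_sub, coeff_add, coeff_X_pow, coeff_one]
      rw [if_neg (show ¬ a - 1 = a by omega), if_neg (show ¬ a - 1 = 0 by omega)]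
      by_cases h : b = a - 1 <;> simp [h] <;> omega
      
    rw [h1, h2]
    by_cases h : b = a - 1 <;> simp [h]
  -- r is a root
  have hrroot : (r : ℂ) ∈ P.roots := by
    rw [mem_roots hPne]
    simp only [IsRoot, hP, eval_sub, eval_add, eval_pow, eval_X, eval_one]
    have : ((r:ℂ)) ^ a - ((r:ℂ)) ^ b - 1 = 0 := by
      exact_mod_cast congrArg (fun x : ℝ => (x : ℂ)) hr
    linear_combination this
  -- split off r
  set s := P.roots.erase (r:ℂ) with hs
  have hcons : P.roots = (r:ℂ) ::ₘ s := (Multiset.cons_erase hrroot).symm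
  have hsumre : ((P.roots).map Complex.re).sum = (P.roots.sum).re :=
    (map_multiset_sum Complex.reAddGroupHom P.roots).symm
  have hsneg : ((s).map Complex.re).sum < 0 := by
    have : ((P.roots).map Complex.re).sum = r + (s.map Complex.re).sum := by
      rw [hcons]; simp
    rw [hsumre, hsum] at this
    linarith [hnext]
  have : ∃ z ∈ s, z.re < 0 := by
    by_contra h
    push_neg at h
    have : 0 ≤ (s.map Complex.re).sum := by
      apply Multiset.sum_nonneg
      intro x hx
      obtain ⟨z, hz, rfl⟩ := Multiset.mem_map.mp hx
      exact h z hz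
    linarith
  obtain ⟨z, hzs, hzre⟩ := this
  refine ⟨z, ?_, hzre⟩
  have hzroot : z ∈ P.roots := Multiset.mem_of_mem_erase hzs
  rw [mem_roots hPne] at hzroot
  have := hzroot
  simp only [IsRoot, hP, eval_sub, eval_add, eval_pow, eval_X, eval_one] at this
  linear_combination this
end

section
/- Let n and k be integers with n ≥ 3 and 1 ≤ k ≤ n/2. Then the polynomial P(z) = z^k + z^{n-k} - z^n has a root z ∈ ℂ with |z - 1| > 1. Consequently, no subdivision of a cycle of order at least 3 has all of its two-terminal reliability roots in the closed unit disk centered at 1. -/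
open Polynomial

private lemma msum_pos {s : Multiset ℝ} (h : ∀ x ∈ s, 0 < x) (hs : s ≠ 0) : 0 < s.sum := by
  induction s using Multiset.induction with
  | empty => exact absurd rfl hs
  | cons a t ih =>
    rw [Multiset.sum_cons]
    rcases eq_or_ne t 0 with rfl | ht
    · simpa using h a (by simp)
    · exact add_pos (h a (by simp)) (ih (fun x hx => h x (by simp [hx])) ht)

private lemma aux_monic (d m : ℕ) (h : m < d) : (X ^ d - X ^ m - C 1 : ℂ[X]).Monic := by
  have h2 : (X ^ d - X ^ m - C 1 : ℂ[X]) = X ^ d - (X ^ m + C 1) := by ring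
  rw [h2]
  apply monic_X_pow_sub
  apply lt_of_le_of_lt (degree_add_le _ _)
  rw [degree_X_pow, max_lt_iff]
  exact ⟨by exact_mod_cast h, lt_of_le_of_lt degree_C_le
    (by exact_mod_cast Nat.lt_of_le_of_lt (Nat.zero_le m) h)⟩

private lemma aux_Q (d m : ℕ) (h : m < d) (h2 : 2 ≤ d) :
    (X ^ d - X ^ m - C 1 : ℂ[X]).natDegree = d ∧
    Multiset.card (X ^ d - X ^ m - C 1 : ℂ[X]).roots = d ∧
    (X ^ d - X ^ m - C 1 : ℂ[X]).roots.sum = (if m + 1 = d then 1 else 0) := by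
  set Q : ℂ[X] := X ^ d - X ^ m - C 1 with hQ
  have hmon := aux_monic d m h
  have hdeg : Q.natDegree = d := by
    have h3 : Q = X ^ d - (X ^ m + C 1) := by rw [hQ]; ring
    rw [h3]
    have hlt : (X ^ m + C 1 : ℂ[X]).natDegree < (X ^ d : ℂ[X]).natDegree := by
      rw [natDegree_X_pow]
      exact lt_of_le_of_lt (natDegree_add_le _ _)
        (by simp [natDegree_C, natDegree_X_pow]; omega)
    rw [natDegree_sub_eq_left_of_natDegree_lt hlt, natDegree_X_pow]
  have hsplits : Q.Splits := IsAlgClosed.splits Q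
  have hcard : Multiset.card Q.roots = d := by
    rw [← hdeg]
    exact (splits_iff_card_roots).mp hsplits
  refine ⟨hdeg, hcard, ?_⟩
  have hsum := hsplits.nextCoeff_eq_neg_sum_roots_of_monic hmon
  have hnc : Q.nextCoeff = -(if m + 1 = d then 1 else 0) := by
    rw [nextCoeff, hdeg]
    have hd0 : ¬ d = 0 := by omega
    simp only [hd0, if_false, hQ]
    rw [coeff_sub, coeff_sub, coeff_X_pow, coeff_X_pow, coeff_C]
    have e1 : ¬ (d - 1 = d) := by omega
    have e2 : ¬ (d - 1 = 0) := by omega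
    rcases eq_or_ne (m + 1) d with he | he
    · have e3 : d - 1 = m := by omega
      simp only [if_neg e1, if_neg e2, if_pos e3, if_pos he]
      norm_num
    · have e3 : ¬ (d - 1 = m) := by omega
      simp only [if_neg e1, if_neg e2, if_neg e3, if_neg he]
      norm_num
  rw [hnc] at hsum
  exact (neg_inj.mp hsum).symm

/-- For integers `n ≥ 3` and `1 ≤ k ≤ n/2`, the polynomial
`z^k + z^(n-k) - z^n` has a root `z` with `|z - 1| > 1`. Consequently, no
subdivision of a cycle of order at least `3` has all of its two-terminal
reliability roots in the closed unit disk centered at `1`. -/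
theorem cycle_two_terminal_root_outside_disk (n k : ℕ) (hn : 3 ≤ n)
    (hk : 1 ≤ k) (hkn : 2 * k ≤ n) :
    ∃ z : ℂ, z ^ k + z ^ (n - k) - z ^ n = 0 ∧ 1 < ‖z - 1‖ := by
  -- special case n = 3, k = 1: explicit root (1 - √5)/2
  by_cases h31 : n = 3 ∧ k = 1
  · obtain ⟨rfl, rfl⟩ := h31
    have h5 : Real.sqrt 5 ^ 2 = 5 := Real.sq_sqrt (by norm_num)
    have h5lt : 1 < Real.sqrt 5 := by nlinarith [Real.sqrt_nonneg 5]
    set a : ℝ := (1 - Real.sqrt 5) / 2 with ha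
    refine ⟨(a : ℂ), ?_, ?_⟩
    · have haa : a ^ 2 = a + 1 := by rw [ha]; nlinarith
      have : (a : ℂ) ^ 2 = (a : ℂ) + 1 := by exact_mod_cast haa
      show (a : ℂ) ^ 1 + (a : ℂ) ^ 2 - (a : ℂ) ^ 3 = 0
      linear_combination (-(a : ℂ)) * this
    · have : ((a : ℂ) - 1) = ((a - 1 : ℝ) : ℂ) := by push_cast; ring
      rw [this, Complex.norm_real, Real.norm_eq_abs]
      rw [abs_of_neg (by rw [ha]; nlinarith)]
      rw [ha]; nlinarith
  -- general case
  set m : ℕ := n - 2 * k with hmdef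
  have hm : n = m + 2 * k := by omega
  set d : ℕ := m + k with hd
  have hmd : m < d := by omega
  have hd2 : 2 ≤ d := by omega
  obtain ⟨hdeg, hcard, hsum⟩ := aux_Q d m hmd hd2
  set Q : ℂ[X] := X ^ d - X ^ m - C 1 with hQ
  have hQ0 : Q ≠ 0 := (aux_monic d m hmd).ne_zero
  by_contra hcon
  push_neg at hcon
  -- every root of Q is a root of the reliability polynomial, hence in the disk
  have hroot : ∀ z ∈ Q.roots, z ^ d - z ^ m - 1 = 0 := by
    intro z hz
    have h := (mem_roots hQ0).mp hz
    simp only [IsRoot, hQ, eval_sub, eval_pow, eval_X, eval_C] at h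
    exact h
  have hdisk : ∀ z ∈ Q.roots, ‖z - 1‖ ≤ 1 := by
    intro z hz
    apply hcon
    have h0 := hroot z hz
    have e1 : n - k = m + k := by omega
    rw [e1, hm]
    linear_combination (-(z ^ k)) * h0
  -- from disk membership: 2 Re z ≥ |z|²
  have hre : ∀ z ∈ Q.roots, z.re ^ 2 + z.im ^ 2 ≤ 2 * z.re := by
    intro z hz
    have h1 := hdisk z hz
    have h2 : Complex.normSq (z - 1) ≤ 1 := by
      have := Complex.sq_norm (z - 1)
      nlinarith [norm_nonneg (z - 1)]
    simp only [Complex.normSq_apply, Complex.sub_re, Complex.sub_im, Complex.one_re,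
      Complex.one_im] at h2
    nlinarith
  have hne : Q.roots ≠ 0 := by
    intro h0
    rw [h0] at hcard
    simp at hcard
    omega
  -- sum of real parts of roots
  have hresum : (Q.roots.map Complex.re).sum = (if m + 1 = d then 1 else 0 : ℝ) := by
    have : (Q.roots.map Complex.re).sum = (Q.roots.sum).re := by
      exact (map_multiset_sum Complex.reAddGroupHom Q.roots).symm
    rw [this, hsum]
    split <;> simp
  rcases eq_or_ne k 1 with hk1 | hk1
  · -- k = 1 : each root has Re ≥ 1/2, there are d ≥ 3 roots, but sum of Re = 1
    have hm2 : 2 ≤ m := by omega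
    have hd3 : 3 ≤ d := by omega
    have hhalf : ∀ x ∈ Q.roots.map Complex.re, (1/2 : ℝ) ≤ x := by
      intro x hx
      obtain ⟨z, hz, rfl⟩ := Multiset.mem_map.mp hx
      have h0 := hroot z hz
      -- z^m * (z - 1) = 1 since d = m + 1
      have hzm : z ^ m * (z - 1) = 1 := by
        have : d = m + 1 := by omega
        rw [this] at h0
        linear_combination h0
      have habs : ‖z‖ ^ m * ‖z - 1‖ = 1 := by
        have := congrArg (‖·‖) hzm
        simpa [norm_mul, norm_pow] using this
      have hz1 : ‖z - 1‖ ≤ 1 := hdisk z hz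
      have hzge : 1 ≤ ‖z‖ := by
        by_contra hlt
        push_neg at hlt
        have h1 : ‖z‖ ^ m < 1 :=
          pow_lt_one₀ (norm_nonneg z) hlt (by omega)
        nlinarith [norm_nonneg (z - 1), pow_nonneg (norm_nonneg z) m]
      have hsq : 1 ≤ ‖z‖ ^ 2 := by nlinarith
      rw [Complex.sq_norm, Complex.normSq_apply] at hsq
      have := hre z hz
      nlinarith
    have hlb := Multiset.card_nsmul_le_sum hhalf
    rw [hresum] at hlb
    rw [Multiset.card_map, hcard] at hlb
    have : (d : ℝ) * (1/2) ≤ (if m + 1 = d then 1 else 0 : ℝ) := by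
      simpa [nsmul_eq_mul] using hlb
    have hdd : (3 : ℝ) ≤ (d : ℝ) := by exact_mod_cast hd3
    split at this <;> nlinarith
  · -- k ≥ 2 : sum of real parts is 0 but each is positive
    have hkk : 2 ≤ k := by omega
    have hne' : m + 1 ≠ d := by omega
    rw [if_neg hne'] at hresum
    have hpos : ∀ x ∈ Q.roots.map Complex.re, 0 < x := by
      intro x hx
      obtain ⟨z, hz, rfl⟩ := Multiset.mem_map.mp hx
      have h0 := hroot z hz
      have hz0 : z ≠ 0 := by
        intro hzz
        rw [hzz] at h0
        simp [zero_pow (by omega : d ≠ 0)] at h0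
        rcases eq_or_ne m 0 with hm0 | hm0
        · rw [hm0] at h0; norm_num at h0
        · rw [zero_pow hm0] at h0; norm_num at h0
      have := hre z hz
      have hnz : 0 < z.re ^ 2 + z.im ^ 2 := by
        rcases Complex.ext_iff.not.mp hz0 with h
        have : z.re ≠ 0 ∨ z.im ≠ 0 := by
          by_contra hc
          push_neg at hc
          exact hz0 (Complex.ext hc.1 hc.2)
        rcases this with h1 | h1
        · nlinarith [sq_nonneg z.im, sq_pos_of_ne_zero h1]
        · nlinarith [sq_nonneg z.re, sq_pos_of_ne_zero h1]
      linarith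
    have := msum_pos hpos (by
      intro hh
      exact hne (Multiset.map_eq_zero.mp hh))
    rw [hresum] at this
    exact lt_irrefl 0 this
end

section
/- Let f : ℂ → ℂ be given by f(z) = z + z² - z³. Then every critical point of f has bounded forward orbit: for every z ∈ ℂ with f'(z) = 1 + 2z - 3z² = 0, the set { f^[n](z) : n ∈ ℕ } is a bounded subset of ℂ. -/
/-- Every critical point of `f z = z + z² - z³` (the two-terminal reliability
of the triangle with adjacent terminals) has a bounded forward orbit. -/
theorem C3_critical_orbits_bounded :
    ∀ z : ℂ, 1 + 2 * z - 3 * z ^ 2 = 0 →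
      Bornology.IsBounded
        (Set.range fun n : ℕ => (fun w : ℂ => w + w ^ 2 - w ^ 3)^[n] z) := by
  intro z hz
  set f : ℂ → ℂ := fun w : ℂ => w + w ^ 2 - w ^ 3 with hf
  have hcases : z = 1 ∨ z = -(1/3) := by
    have h0 : (z - 1) * (3 * z + 1) = 0 := by ring_nf; linear_combination -hz
    rcases mul_eq_zero.mp h0 with h | h
    · left; linear_combination h
    · right; linear_combination h / 3
  apply (Metric.isBounded_closedBall (x := (0:ℂ)) (r := 1)).subset
  rintro w ⟨n, rfl⟩
  simp only [Metric.mem_closedBall, dist_zero_right]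
  rcases hcases with rfl | rfl
  · have hfix : f 1 = 1 := by simp [hf]
    rw [Function.iterate_fixed hfix]
    simp
  · have key : ∀ n : ℕ, ∃ x : ℝ, -(1/3) ≤ x ∧ x ≤ 0 ∧ f^[n] (-(1/3)) = (x : ℂ) := by
      intro n
      induction n with
      | zero =>
        exact ⟨-(1/3), le_refl _, by norm_num, by norm_num⟩
      | succ n ih =>
        obtain ⟨x, hx1, hx2, hx⟩ := ih
        refine ⟨x + x ^ 2 - x ^ 3, by nlinarith, by nlinarith, ?_⟩
        rw [Function.iterate_succ_apply', hx]
        simp only [hf]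
        push_cast
        ring
    obtain ⟨x, hx1, hx2, hx⟩ := key n
    rw [hx]
    rw [Complex.norm_real, Real.norm_eq_abs]
    rw [abs_le]
    constructor <;> linarith
end

section
/- Let f : ℂ → ℂ be given by f(z) = z + z³ - z⁴. Then every critical point of f has bounded forward orbit: for every z ∈ ℂ with f'(z) = 1 + 3z² - 4z³ = 0, the set { f^[n](z) : n ∈ ℕ } is a bounded subset of ℂ. -/
set_option maxHeartbeats 1000000

open Complex Function

private lemma normSqLe (w : ℂ) (hw : w ≠ 0) (h : ((w ^ 2)⁻¹).re ≤ -12) :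
    ‖w‖ ^ 2 ≤ 1 / 12 := by
  have h1 : (12 : ℝ) ≤ ‖(w ^ 2)⁻¹‖ := by
    have h2 := Complex.abs_re_le_norm ((w ^ 2)⁻¹)
    have h3 : (12 : ℝ) ≤ |((w ^ 2)⁻¹).re| := by
      rw [abs_of_nonpos (by linarith)]; linarith
    linarith
  rw [norm_inv, norm_pow] at h1
  have hp : 0 < ‖w‖ ^ 2 := pow_pos (norm_pos_iff.mpr hw) 2
  have hc : ‖w‖ ^ 2 * (‖w‖ ^ 2)⁻¹ = 1 := mul_inv_cancel₀ hp.ne'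
  nlinarith

private lemma normLeOne (w : ℂ) (hw : w ≠ 0) (h : ((w ^ 2)⁻¹).re ≤ -12) :
    ‖w‖ ≤ 1 := by
  have h1 := normSqLe w hw h
  nlinarith [norm_nonneg w]

private lemma stepInv (w : ℂ) (hw : w ≠ 0) (h : ((w ^ 2)⁻¹).re ≤ -12) :
    w + w ^ 3 - w ^ 4 ≠ 0 ∧ (((w + w ^ 3 - w ^ 4) ^ 2)⁻¹).re ≤ -12 := by
  have ha2 : ‖w‖ ^ 2 ≤ 1 / 12 := normSqLe w hw h
  have ha0 : (0 : ℝ) ≤ ‖w‖ := norm_nonneg w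
  have ha : ‖w‖ ≤ 0.289 := by nlinarith
  have hb0 : (0 : ℝ) ≤ ‖1 - w‖ := norm_nonneg _
  have h1w : ‖1 - w‖ ≤ 1.289 := by
    have h2 := norm_sub_le (1 : ℂ) w
    rw [norm_one] at h2
    linarith
  have hg : ‖w ^ 2 - w ^ 3‖ ≤ 0.11 := by
    have h2 := norm_sub_le (w ^ 2) (w ^ 3)
    rw [norm_pow, norm_pow] at h2
    nlinarith
  have h1g : (0.89 : ℝ) ≤ ‖1 + (w ^ 2 - w ^ 3)‖ := by
    have h2 : ‖(1 : ℂ)‖ ≤ ‖1 + (w ^ 2 - w ^ 3)‖ + ‖w ^ 2 - w ^ 3‖ := by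
      have h3 := norm_sub_le (1 + (w ^ 2 - w ^ 3)) (w ^ 2 - w ^ 3)
      have h4 : (1 + (w ^ 2 - w ^ 3)) - (w ^ 2 - w ^ 3) = 1 := by ring
      rw [h4] at h3
      linarith
    rw [norm_one] at h2
    linarith
  have hne : (1 : ℂ) + (w ^ 2 - w ^ 3) ≠ 0 := by
    intro h0
    rw [h0, norm_zero] at h1g
    norm_num at h1g
  have hfw : w + w ^ 3 - w ^ 4 ≠ 0 := by
    have hfac : w + w ^ 3 - w ^ 4 = w * (1 + (w ^ 2 - w ^ 3)) := by ring
    rw [hfac]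
    exact mul_ne_zero hw hne
  refine ⟨hfw, ?_⟩
  have hid : ((w + w ^ 3 - w ^ 4) ^ 2)⁻¹
      = (w ^ 2)⁻¹ - 2 + (2 * w - w ^ 2 * (1 - w) ^ 2 + 4 * w ^ 2 * (1 - w)
          + 2 * w ^ 4 * (1 - w) ^ 2) / (1 + (w ^ 2 - w ^ 3)) ^ 2 := by
    rw [inv_eq_one_div, inv_eq_one_div, div_sub' (pow_ne_zero 2 hw), div_add_div _ _ (pow_ne_zero 2 hw) (pow_ne_zero 2 hne), div_eq_div_iff (pow_ne_zero 2 hfw) (mul_ne_zero (pow_ne_zero 2 hw) (pow_ne_zero 2 hne))]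
    ring
  have t1 : ‖2 * w‖ = 2 * ‖w‖ := by rw [norm_mul]; norm_num
  have t2 : ‖w ^ 2 * (1 - w) ^ 2‖ = ‖w‖ ^ 2 * ‖1 - w‖ ^ 2 := by
    rw [norm_mul, norm_pow, norm_pow]
  have t3 : ‖4 * w ^ 2 * (1 - w)‖ = 4 * ‖w‖ ^ 2 * ‖1 - w‖ := by
    rw [norm_mul, norm_mul, norm_pow]; norm_num
  have t4 : ‖2 * w ^ 4 * (1 - w) ^ 2‖ = 2 * ‖w‖ ^ 4 * ‖1 - w‖ ^ 2 := by
    rw [norm_mul, norm_mul, norm_pow, norm_pow]; norm_num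
  have b2 : ‖w‖ ^ 2 * ‖1 - w‖ ^ 2 ≤ 0.139 := by nlinarith
  have b3 : 4 * ‖w‖ ^ 2 * ‖1 - w‖ ≤ 0.43 := by nlinarith
  have b4 : 2 * ‖w‖ ^ 4 * ‖1 - w‖ ^ 2 ≤ 0.024 := by nlinarith
  have hnum : ‖2 * w - w ^ 2 * (1 - w) ^ 2 + 4 * w ^ 2 * (1 - w)
      + 2 * w ^ 4 * (1 - w) ^ 2‖ ≤ 1.18 := by
    have e1 := norm_add_le (2 * w - w ^ 2 * (1 - w) ^ 2 + 4 * w ^ 2 * (1 - w))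
      (2 * w ^ 4 * (1 - w) ^ 2)
    have e2 := norm_add_le (2 * w - w ^ 2 * (1 - w) ^ 2) (4 * w ^ 2 * (1 - w))
    have e3 := norm_sub_le (2 * w) (w ^ 2 * (1 - w) ^ 2)
    rw [t4] at e1
    rw [t3] at e2
    rw [t1, t2] at e3
    nlinarith
  have hden : (0.79 : ℝ) ≤ ‖(1 + (w ^ 2 - w ^ 3)) ^ 2‖ := by
    rw [norm_pow]; nlinarith
  have hdenpos : (0 : ℝ) < ‖(1 + (w ^ 2 - w ^ 3)) ^ 2‖ := by linarith
  have hfrac : ‖(2 * w - w ^ 2 * (1 - w) ^ 2 + 4 * w ^ 2 * (1 - w)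
      + 2 * w ^ 4 * (1 - w) ^ 2) / (1 + (w ^ 2 - w ^ 3)) ^ 2‖ ≤ 1.5 := by
    rw [norm_div, div_le_iff₀ hdenpos]
    nlinarith [hnum, hden]
  have hreE : ((2 * w - w ^ 2 * (1 - w) ^ 2 + 4 * w ^ 2 * (1 - w)
      + 2 * w ^ 4 * (1 - w) ^ 2) / (1 + (w ^ 2 - w ^ 3)) ^ 2).re ≤ 1.5 := by
    have h5 := Complex.re_le_norm ((2 * w - w ^ 2 * (1 - w) ^ 2 + 4 * w ^ 2 * (1 - w)
      + 2 * w ^ 4 * (1 - w) ^ 2) / (1 + (w ^ 2 - w ^ 3)) ^ 2)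
    linarith
  have hre := congrArg Complex.re hid
  rw [hre]
  simp only [Complex.add_re, Complex.sub_re, Complex.re_ofNat]
  linarith

private lemma orbitMem (w : ℂ) (hw : w ≠ 0) (h : ((w ^ 2)⁻¹).re ≤ -12) (n : ℕ) :
    (fun w : ℂ => w + w ^ 3 - w ^ 4)^[n] w ≠ 0 ∧
      ((((fun w : ℂ => w + w ^ 3 - w ^ 4)^[n] w) ^ 2)⁻¹).re ≤ -12 := by
  induction n with
  | zero => exact ⟨hw, h⟩
  | succ n ih =>
    rw [Function.iterate_succ_apply']
    exact stepInv _ ih.1 ih.2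

/-- Every critical point of `f z = z + z³ - z⁴` (the two-terminal reliability
of the 4-cycle with adjacent terminals) has a bounded forward orbit. -/
theorem C4_adjacent_critical_orbits_bounded :
    ∀ z : ℂ, 1 + 3 * z ^ 2 - 4 * z ^ 3 = 0 →
      Bornology.IsBounded
        (Set.range fun n : ℕ => (fun w : ℂ => w + w ^ 3 - w ^ 4)^[n] z) := by
  intro z hz
  rw [isBounded_iff_forall_norm_le]
  refine ⟨1, ?_⟩
  rintro x ⟨n, rfl⟩
  simp only
  by_cases h1 : z = 1
  · subst h1
    have hfix : (fun w : ℂ => w + w ^ 3 - w ^ 4) 1 = 1 := by norm_num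
    have hone : (fun w : ℂ => w + w ^ 3 - w ^ 4)^[n] 1 = 1 :=
      Function.iterate_fixed (f := fun w : ℂ => w + w ^ 3 - w ^ 4) (x := 1) hfix n
    rw [hone]
    norm_num
  · have h2 : 4 * z ^ 2 + z + 1 = 0 := by
      have hfac : (z - 1) * (4 * z ^ 2 + z + 1) = -(1 + 3 * z ^ 2 - 4 * z ^ 3) := by
        ring
      rw [hz, neg_zero] at hfac
      rcases mul_eq_zero.mp hfac with h | h
      · exact absurd (sub_eq_zero.mp h) h1
      · exact h
    have hre := congrArg Complex.re h2
    have him := congrArg Complex.im h2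
    simp only [Complex.add_re, Complex.add_im, Complex.mul_re, Complex.mul_im,
      Complex.re_ofNat, Complex.im_ofNat, Complex.one_re, Complex.one_im,
      Complex.zero_re, Complex.zero_im, pow_two, zero_mul, mul_zero, add_zero,
      zero_add, sub_zero] at hre him
    have hy0 : z.im ≠ 0 := by
      intro h0
      rw [h0] at hre
      nlinarith [sq_nonneg (2 * z.re + 1 / 4)]
    have hx : z.re = -1 / 8 := by
      have hsplit : z.im * (8 * z.re + 1) = 0 := by linear_combination him
      rcases mul_eq_zero.mp hsplit with h | h
      · exact absurd h hy0
      · linarith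
    have hy2 : z.im ^ 2 = 15 / 64 := by nlinarith
    have hcomp : ∀ a b : ℝ, (((a : ℂ)) + ((b : ℂ)) * z).re = a - b / 8 ∧
        (((a : ℂ)) + ((b : ℂ)) * z).im ^ 2 = b ^ 2 * (15 / 64) := by
      intro a b
      constructor
      · simp only [Complex.add_re, Complex.mul_re, Complex.ofReal_re,
          Complex.ofReal_im, hx, zero_mul, sub_zero]
        ring
      · simp only [Complex.add_im, Complex.mul_im, Complex.ofReal_re,
          Complex.ofReal_im, zero_mul, mul_zero, add_zero, zero_add]
        rw [mul_pow, hy2]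
    have hw1 : (fun w : ℂ => w + w ^ 3 - w ^ 4)^[1] z
        = (((1 / 64 : ℝ) : ℂ)) + (((45 / 64 : ℝ) : ℂ)) * z := by
      rw [Function.iterate_one]
      push_cast
      linear_combination (-(1:ℂ)/64 + (5/16) * z - (1/4) * z ^ 2) * h2
    have hw2 : (fun w : ℂ => w + w ^ 3 - w ^ 4)^[2] z
        = (((20322973 / 1073741824 : ℝ) : ℂ)) + (((655175385 / 1073741824 : ℝ) : ℂ)) * z := by
      rw [show (2 : ℕ) = 1 + 1 from rfl, Function.iterate_add_apply, hw1,
        Function.iterate_one]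
      push_cast
      linear_combination (-(3541725:ℂ)/1073741824 + (25970625/268435456) * z - (4100625/67108864) * z ^ 2) * h2
    have hw3 : (fun w : ℂ => w + w ^ 3 - w ^ 4)^[3] z
        = (((1741796192230966332013731654664976941 / 85070591730234615865843651857942052864 : ℝ) : ℂ)) + (((46890939886211714300167086426086604585 / 85070591730234615865843651857942052864 : ℝ) : ℂ)) * z := by
      rw [show (3 : ℕ) = 1 + 2 from rfl, Function.iterate_add_apply, hw2,
        Function.iterate_one]
      push_cast
      linear_combination (-(131078480592257316754446528840674925:ℂ)/85070591730234615865843651857942052864 + (1300714907926370666815930952731028625/21267647932558653966460912964485513216) * z - (184259670539744902900590869858150625/5316911983139663491615228241121378304) * z ^ 2) * h2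
    have hnormle : ∀ v : ℂ, v.re ^ 2 + v.im ^ 2 ≤ 1 → ‖v‖ ≤ 1 := by
      intro v hv
      have hv1 : ‖v‖ ^ 2 = v.re ^ 2 + v.im ^ 2 := by
        rw [Complex.sq_norm, Complex.normSq_apply]
        ring
      nlinarith [norm_nonneg v]
    obtain ⟨hc3re, hc3im⟩ := hcomp (1741796192230966332013731654664976941 / 85070591730234615865843651857942052864) (46890939886211714300167086426086604585 / 85070591730234615865843651857942052864)
    have hm3ne : (fun w : ℂ => w + w ^ 3 - w ^ 4)^[3] z ≠ 0 := by
      rw [hw3]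
      intro h0
      have h5 := congrArg Complex.re h0
      rw [hc3re, Complex.zero_re] at h5
      norm_num at h5
    have hm3re : ((((fun w : ℂ => w + w ^ 3 - w ^ 4)^[3] z) ^ 2)⁻¹).re ≤ -12 := by
      rw [hw3, Complex.inv_re]
      set v : ℂ := ((1741796192230966332013731654664976941 / 85070591730234615865843651857942052864 : ℝ) : ℂ) + ((46890939886211714300167086426086604585 / 85070591730234615865843651857942052864 : ℝ) : ℂ) * z with hv_def
      have hvre : (v ^ 2).re = v.re ^ 2 - v.im ^ 2 := by
        rw [pow_two, Complex.mul_re]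
        ring
      have hns : Complex.normSq (v ^ 2) = (v.re ^ 2 + v.im ^ 2) ^ 2 := by
        rw [map_pow, Complex.normSq_apply]
        ring
      rw [hvre, hns, hc3re, hc3im]
      rw [div_le_iff₀ (by norm_num)]
      norm_num
    rcases Nat.lt_or_ge n 3 with hn | hn
    · interval_cases n
      · simp only [Function.iterate_zero, id_eq]
        apply hnormle
        rw [hx, hy2]
        norm_num
      · rw [hw1]
        apply hnormle
        obtain ⟨hc1, hc2⟩ := hcomp (1 / 64) (45 / 64)
        rw [hc1, hc2]
        norm_num
      · rw [hw2]
        apply hnormle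
        obtain ⟨hc1, hc2⟩ := hcomp (20322973 / 1073741824) (655175385 / 1073741824)
        rw [hc1, hc2]
        norm_num
    · obtain ⟨m, rfl⟩ : ∃ m, n = m + 3 := ⟨n - 3, by omega⟩
      rw [Function.iterate_add_apply]
      obtain ⟨hA, hB⟩ := orbitMem _ hm3ne hm3re m
      exact normLeOne _ hA hB
end

section
/- Let k be a positive integer and let f : ℂ → ℂ be given by f(z) = 2z^k - z^{2k}. Then every critical point of f has bounded forward orbit: for every z ∈ ℂ with f'(z) = 2k z^{k-1}(1 - z^k) = 0, the set { f^[n](z) : n ∈ ℕ } is a bounded subset of ℂ. -/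
/-- For every positive integer `k`, every critical point of
`f z = 2z^k - z^(2k)` (the two-terminal reliability of the even cycle
`C_{2k}` with antipodal terminals) has a bounded forward orbit. -/
theorem even_cycle_antipodal_critical_orbits_bounded (k : ℕ) (hk : 0 < k) :
    ∀ z : ℂ, 2 * k * z ^ (k - 1) * (1 - z ^ k) = 0 →
      Bornology.IsBounded
        (Set.range fun n : ℕ =>
          (fun w : ℂ => 2 * w ^ k - w ^ (2 * k))^[n] z) := by
  intro z hz
  set f : ℂ → ℂ := fun w => 2 * w ^ k - w ^ (2 * k) with hf
  have hsub : Set.range (fun n : ℕ => f^[n] z) ⊆ {z, 0, 1} := by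
    rintro _ ⟨n, rfl⟩
    have hcase : z = 0 ∨ z ^ k = 1 := by
      rcases mul_eq_zero.mp hz with h | h
      · rcases mul_eq_zero.mp h with h2 | h2
        · norm_num at h2
          exact absurd h2 (Nat.cast_ne_zero.mpr hk.ne')
        · by_cases hk1 : k = 1
          · subst hk1; simp at h2
          · left
            exact pow_eq_zero_iff (by omega) |>.mp h2
      · right; linear_combination -h
    rcases hcase with rfl | h1
    · have h0 : ∀ n, f^[n] (0 : ℂ) = 0 := by
        intro n
        induction n with
        | zero => simp
        | succ m ih =>
          rw [Function.iterate_succ_apply', ih]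
          simp [hf, zero_pow hk.ne', zero_pow (by omega : 2 * k ≠ 0)]
      simp only [h0]
      simp
    · rcases Nat.eq_zero_or_pos n with rfl | hn
      · simp
      · have key : ∀ m, 0 < m → f^[m] z = 1 := by
          intro m hm
          induction m with
          | zero => omega
          | succ j ih =>
            rcases Nat.eq_zero_or_pos j with rfl | hj
            · show f z = 1
              have h2 : z ^ (2 * k) = 1 := by rw [mul_comm, pow_mul, h1]; ring
              simp only [hf, h1, h2]; ring
            · rw [Function.iterate_succ_apply', ih hj]
              simp [hf]; norm_num
        simp only [key n hn]
        right; right; rfl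
  exact (((Set.finite_singleton (1:ℂ)).insert 0 |>.insert z).subset hsub).isBounded
end

section
/- Let f : ℂ → ℂ be given by f(z) = z⁶ - z⁵ - 2z⁴ + 2z³ + z. Then there exists a real number r with -1.2 < r < -1.1 such that f'(r) = 0 and the forward orbit { f^[n](r) : n ∈ ℕ } is an unbounded subset of ℂ. In particular, f has a critical point with unbounded forward orbit. -/
private noncomputable def Fre : ℝ → ℝ := fun x => x ^ 6 - x ^ 5 - 2 * x ^ 4 + 2 * x ^ 3 + x

private lemma Fre_escape {x : ℝ} (hx : 3 ≤ |x|) : |x| + 1 ≤ |Fre x| := by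
  have key : |Fre x| ≥ |x| ^ 6 - (|x| ^ 5 + 2 * |x| ^ 4 + 2 * |x| ^ 3 + |x|) := by
    have h0 : Fre x = x ^ 6 - (x ^ 5 + 2 * x ^ 4 - 2 * x ^ 3 - x) := by
      simp [Fre]; ring
    have h1 : |x ^ 6| - |x ^ 5 + 2 * x ^ 4 - 2 * x ^ 3 - x| ≤ |Fre x| := by
      rw [h0]; exact abs_sub_abs_le_abs_sub _ _
    have h2 : |x ^ 5 + 2 * x ^ 4 - 2 * x ^ 3 - x| ≤
        |x| ^ 5 + 2 * |x| ^ 4 + 2 * |x| ^ 3 + |x| := by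
      rw [abs_le]
      have a5 : |x| ^ 5 = |x ^ 5| := (abs_pow x 5).symm
      have a4 : |x| ^ 4 = |x ^ 4| := (abs_pow x 4).symm
      have a3 : |x| ^ 3 = |x ^ 3| := (abs_pow x 3).symm
      constructor <;>
        nlinarith [le_abs_self x, neg_abs_le x, le_abs_self (x ^ 3), neg_abs_le (x ^ 3),
          le_abs_self (x ^ 4), neg_abs_le (x ^ 4), le_abs_self (x ^ 5), neg_abs_le (x ^ 5)]
    have h3 : |x ^ 6| = |x| ^ 6 := abs_pow x 6
    linarith
  set t := |x| with ht
  nlinarith [pow_le_pow_left₀ (by norm_num : (0:ℝ) ≤ 3) hx 5, sq_nonneg t, sq_nonneg (t - 3)]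

private lemma iterate_coe (x : ℝ) (n : ℕ) :
    (fun w : ℂ => w ^ 6 - w ^ 5 - 2 * w ^ 4 + 2 * w ^ 3 + w)^[n] (x : ℂ)
      = ((Fre^[n] x : ℝ) : ℂ) := by
  induction n with
  | zero => simp
  | succ n ih =>
    rw [Function.iterate_succ_apply', Function.iterate_succ_apply', ih]
    push_cast [Fre]
    ring

/-- There is a real critical point `r ∈ (-1.2, -1.1)` of
`f z = z⁶ - z⁵ - 2z⁴ + 2z³ + z` (i.e. `f'(r) = 6r⁵ - 5r⁴ - 8r³ + 6r² + 1 = 0`)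
whose forward orbit under `f` is unbounded. -/
theorem K23_critical_point_unbounded_orbit :
    ∃ r : ℝ, -1.2 < r ∧ r < -1.1 ∧
      6 * r ^ 5 - 5 * r ^ 4 - 8 * r ^ 3 + 6 * r ^ 2 + 1 = 0 ∧
      ¬ Bornology.IsBounded
        (Set.range fun n : ℕ =>
          (fun w : ℂ => w ^ 6 - w ^ 5 - 2 * w ^ 4 + 2 * w ^ 3 + w)^[n]
            (r : ℂ)) := by
  set g : ℝ → ℝ := fun x => 6 * x ^ 5 - 5 * x ^ 4 - 8 * x ^ 3 + 6 * x ^ 2 + 1 with hg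
  have hcont : ContinuousOn g (Set.Icc (-1.16) (-1.155)) := by
    apply Continuous.continuousOn; fun_prop
  have hab : (-1.16 : ℝ) ≤ -1.155 := by norm_num
  have hmem : (0 : ℝ) ∈ Set.Icc (g (-1.16)) (g (-1.155)) := by
    constructor <;> · simp only [hg]; norm_num
  obtain ⟨r, hrIcc, hr0⟩ := intermediate_value_Icc hab hcont hmem
  obtain ⟨hr1, hr2⟩ := hrIcc
  refine ⟨r, by linarith, by linarith, hr0, ?_⟩
  -- |Fre r| ≥ 3
  have hstep1 : |Fre r| ≥ 3 := by
    have : Fre r ≤ -3 := by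
      simp only [Fre]
      nlinarith [sq_nonneg (r + 1.157), sq_nonneg ((r + 1.157) * r), sq_nonneg r,
        sq_nonneg ((r + 1.157) * r ^ 2)]
    rw [abs_of_nonpos (by linarith)]
    linarith
  -- |Fre^[n+1] r| ≥ 3 + n
  have hgrow : ∀ n : ℕ, 3 + (n : ℝ) ≤ |Fre^[n + 1] r| := by
    intro n
    induction n with
    | zero => simpa using hstep1
    | succ n ih =>
      have h3 : 3 ≤ |Fre^[n + 1] r| := by
        have : (0:ℝ) ≤ n := Nat.cast_nonneg n
        linarith
      have := Fre_escape h3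
      rw [Function.iterate_succ_apply']
      push_cast
      linarith
  rw [isBounded_iff_forall_norm_le]
  rintro ⟨C, hC⟩
  set n := ⌈C⌉₊ with hn
  have hmem' : ((fun w : ℂ => w ^ 6 - w ^ 5 - 2 * w ^ 4 + 2 * w ^ 3 + w)^[n + 1] (r : ℂ)) ∈
      Set.range fun n : ℕ =>
        (fun w : ℂ => w ^ 6 - w ^ 5 - 2 * w ^ 4 + 2 * w ^ 3 + w)^[n] (r : ℂ) :=
    ⟨n + 1, rfl⟩
  have hnorm := hC _ hmem'
  rw [iterate_coe, Complex.norm_real, Real.norm_eq_abs] at hnorm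
  have h1 := hgrow n
  have h2 : C ≤ (n : ℝ) := Nat.le_ceil C
  linarith
end
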